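/- For every integer p ≥ 1, the p-th moment of the Marchenko–Pastur measure π_1 equals the p-th Catalan number: ∫ x^p dπ_1(x) = Cat_p = binom(2p,p)/(p+1). -/

import Mathlib

open MeasureTheory
open scoped ENNReal NNReal

/-- The density of the absolutely continuous part of the Marchenko–Pastur
distribution with parameter `c`: `√(4c - (x-1-c)²)/(2πx)` on the interval
`[1+c-2√c, 1+c+2√c]`, and `0` elsewhere. -/
noncomputable def mpDensity (c : ℝ) (x : ℝ) : ℝ :=
  if 1 + c - 2 * Real.sqrt c ≤ x ∧ x ≤ 1 + c + 2 * Real.sqrt c then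
    Real.sqrt (4 * c - (x - 1 - c) ^ 2) / (2 * Real.pi * x)
  else 0

/-- The Marchenko–Pastur measure with parameter `c`:
`π_c = max(1-c,0)·δ₀ + mpDensity c · Lebesgue`. -/
noncomputable def mpMeasure (c : ℝ) : Measure ℝ :=
  ENNReal.ofReal (max (1 - c) 0) • Measure.dirac 0 +
    volume.withDensity fun x => ENNReal.ofReal (mpDensity c x)

open Real intervalIntegral in
private lemma aux_J (p : ℕ) :
    (∫ t in (0:ℝ)..(π/2), Real.sin t ^ (2*p)) = π/2 * ((2*p).choose p) / 4^p := by
  induction p with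
  | zero => simp
  | succ m ih =>
    have h := integral_sin_pow (a := (0:ℝ)) (b := π/2) (n := 2*m)
    have he : 2*(m+1) = 2*m + 2 := by ring
    rw [he, h, ih]
    simp only [Real.sin_zero, Real.cos_pi_div_two, mul_zero, zero_pow, zero_mul]
    have hbin : ((m+1 : ℕ) : ℝ) * ((2*(m+1)).choose (m+1) : ℕ) =
        2 * (2*m+1) * ((2*m).choose m : ℕ) := by
      exact_mod_cast Nat.succ_mul_centralBinom_succ m
    rw [show 2*(m+1) = 2*m+2 from by ring] at hbin
    push_cast at hbin ⊢
    have h4 : (4:ℝ)^m ≠ 0 := by positivity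
    have hm1 : ((m:ℝ)+1) ≠ 0 := by positivity
    field_simp
    linear_combination (-2 * (4:ℝ)^m * Real.pi) * hbin

open Real intervalIntegral in
private lemma aux_K (m : ℕ) :
    (∫ t in (0:ℝ)..(π/2), (Real.sin t ^ (2*m+2) - Real.sin t ^ (2*m+4))) =
      π * ((2*(m+1)).choose (m+1)) / ((m+2) * 4^(m+2)) := by
  have hi1 : IntervalIntegrable (fun t => Real.sin t ^ (2*m+2)) volume 0 (π/2) :=
    (Continuous.pow Real.continuous_sin _).intervalIntegrable _ _
  have hi2 : IntervalIntegrable (fun t => Real.sin t ^ (2*m+4)) volume 0 (π/2) :=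
    (Continuous.pow Real.continuous_sin _).intervalIntegrable _ _
  rw [intervalIntegral.integral_sub hi1 hi2]
  have h1 : (∫ t in (0:ℝ)..(π/2), Real.sin t ^ (2*m+2)) =
      π/2 * ((2*(m+1)).choose (m+1)) / 4^(m+1) := by
    have := aux_J (m+1); rw [show 2*(m+1) = 2*m+2 by ring] at this
    rw [this, show 2*(m+1) = 2*m+2 from by ring]
  have h2 : (∫ t in (0:ℝ)..(π/2), Real.sin t ^ (2*m+4)) =
      (2*m+3)/(2*m+4) * (π/2 * ((2*(m+1)).choose (m+1)) / 4^(m+1)) := by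
    have h := integral_sin_pow (a := (0:ℝ)) (b := π/2) (n := 2*m+2)
    rw [show 2*m+2+2 = 2*m+4 by ring] at h
    rw [h, h1]
    simp only [Real.sin_zero, Real.cos_pi_div_two, mul_zero, zero_pow, zero_mul]
    push_cast
    ring
  rw [h1, h2]
  have h4 : (4:ℝ)^(m+1) ≠ 0 := by positivity
  have hπ : π ≠ 0 := Real.pi_ne_zero
  field_simp
  ring

private lemma mpDensity_one_nonneg (x : ℝ) : 0 ≤ mpDensity 1 x := by
  unfold mpDensity
  split
  · rename_i h
    have hx : (0:ℝ) ≤ x := by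
      have := h.1; simp [Real.sqrt_one] at this; linarith
    have : 0 ≤ 2 * Real.pi * x := by positivity
    exact div_nonneg (Real.sqrt_nonneg _) this
  · exact le_refl 0

private lemma mpDensity_measurable : Measurable (mpDensity 1) := by
  unfold mpDensity
  apply Measurable.ite
  · exact (measurableSet_Icc (a := 1 + 1 - 2 * Real.sqrt 1) (b := 1 + 1 + 2 * Real.sqrt 1))
  · fun_prop
  · fun_prop

/-- For every `p ≥ 1`, the `p`-th moment of the Marchenko–Pastur
measure `π₁` equals the `p`-th Catalan number `binom(2p,p)/(p+1)`. -/
theorem mpMeasure_one_moments_catalan (p : ℕ) (hp : 1 ≤ p) :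
    ∫ x, x ^ p ∂(mpMeasure 1) = ((2 * p).choose p : ℝ) / (p + 1) := by
  obtain ⟨m, rfl⟩ : ∃ m, p = m + 1 := ⟨p - 1, (Nat.succ_pred_eq_of_pos hp).symm⟩
  clear hp
  set p := m + 1 with hpdef
  -- Step 1: reduce to the absolutely continuous part
  have hmeas : mpMeasure 1 = volume.withDensity fun x => ENNReal.ofReal (mpDensity 1 x) := by
    unfold mpMeasure
    simp
  rw [hmeas]
  -- Step 2: rewrite as a Lebesgue integral against the density
  have hf : Measurable fun x => (mpDensity 1 x).toNNReal :=
    mpDensity_measurable.real_toNNReal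
  have hrw : (volume.withDensity fun x => ENNReal.ofReal (mpDensity 1 x)) =
      volume.withDensity fun x => ((mpDensity 1 x).toNNReal : ℝ≥0∞) := rfl
  rw [hrw, integral_withDensity_eq_integral_smul hf]
  have h1 : ∀ x : ℝ, (mpDensity 1 x).toNNReal • x ^ p =
      Set.indicator (Set.Icc (0:ℝ) 4)
        (fun x => Real.sqrt (4 - (x-2)^2) / (2 * Real.pi) * x ^ m) x := by
    intro x
    rw [NNReal.smul_def, smul_eq_mul,
      Real.coe_toNNReal _ (mpDensity_one_nonneg x)]
    unfold mpDensity
    rw [Set.indicator_apply]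
    have hmem : (1 + 1 - 2 * Real.sqrt 1 ≤ x ∧ x ≤ 1 + 1 + 2 * Real.sqrt 1) ↔
        x ∈ Set.Icc (0:ℝ) 4 := by
      simp [Real.sqrt_one, Set.mem_Icc]
      constructor <;> intro h <;> constructor <;> linarith [h.1, h.2]
    by_cases hx : x ∈ Set.Icc (0:ℝ) 4
    · rw [if_pos (hmem.mpr hx), if_pos hx]
      have h41 : (4:ℝ) * 1 - (x - 1 - 1)^2 = 4 - (x-2)^2 := by ring
      rw [h41]
      by_cases hx0 : x = 0
      · subst hx0
        norm_num
      · have hπ : Real.pi ≠ 0 := Real.pi_ne_zero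
        field_simp
        ring
    · rw [if_neg (fun h => hx (hmem.mp h)), if_neg hx, zero_mul]
  rw [MeasureTheory.integral_congr_ae (Filter.Eventually.of_forall h1),
    MeasureTheory.integral_indicator measurableSet_Icc,
    MeasureTheory.integral_Icc_eq_integral_Ioc,
    ← intervalIntegral.integral_of_le (by norm_num : (0:ℝ) ≤ 4)]
  -- Step 3: substitution x = 4 sin² t
  have hsub : (∫ x in (0:ℝ)..4, Real.sqrt (4 - (x-2)^2) / (2 * Real.pi) * x ^ m) =
      ∫ t in (0:ℝ)..(Real.pi/2), (8 * Real.sin t * Real.cos t) •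
        ((fun x => Real.sqrt (4 - (x-2)^2) / (2 * Real.pi) * x ^ m) ∘
          (fun t => 4 * Real.sin t ^ 2)) t := by
    rw [intervalIntegral.integral_comp_smul_deriv
      (f := fun t => 4 * Real.sin t ^ 2) (f' := fun t => 8 * Real.sin t * Real.cos t)
      (g := fun x => Real.sqrt (4 - (x-2)^2) / (2 * Real.pi) * x ^ m)
      (a := 0) (b := Real.pi/2)
      (fun t _ => by
        have h := ((Real.hasDerivAt_sin t).pow 2).const_mul (4:ℝ)
        exact h.congr_deriv (by norm_num; ring))
      (by fun_prop)
      (by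
        have hc : Continuous fun x : ℝ => Real.sqrt (4 - (x-2)^2) := by fun_prop
        fun_prop)]
    norm_num
  rw [hsub]
  -- Step 4: simplify the integrand
  have h2 : ∀ t ∈ Set.uIcc (0:ℝ) (Real.pi/2),
      (8 * Real.sin t * Real.cos t) •
        ((fun x => Real.sqrt (4 - (x-2)^2) / (2 * Real.pi) * x ^ m) ∘
          (fun t => 4 * Real.sin t ^ 2)) t =
      (4:ℝ)^(m+2) / Real.pi * (Real.sin t ^ (2*m+2) - Real.sin t ^ (2*m+4)) := by
    intro t ht
    rw [Set.uIcc_of_le (by positivity : (0:ℝ) ≤ Real.pi/2)] at ht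
    have hs : 0 ≤ Real.sin t := Real.sin_nonneg_of_nonneg_of_le_pi ht.1
      (le_trans ht.2 (by linarith [Real.pi_pos]))
    have hc : 0 ≤ Real.cos t := Real.cos_nonneg_of_mem_Icc
      ⟨by linarith [ht.1, Real.pi_pos], ht.2⟩
    have hpy : Real.sin t ^ 2 + Real.cos t ^ 2 = 1 := Real.sin_sq_add_cos_sq t
    have hsq : (4:ℝ) - (4 * Real.sin t ^ 2 - 2)^2 = (4 * Real.sin t * Real.cos t)^2 := by
      nlinarith [hpy]
    simp only [Function.comp_apply, smul_eq_mul]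
    rw [hsq, Real.sqrt_sq (by positivity)]
    have hπ : Real.pi ≠ 0 := Real.pi_ne_zero
    field_simp
    rw [mul_pow, ← pow_mul]
    linear_combination (32 * (4:ℝ)^m * Real.sin t ^ (2*m+2)) * hpy
  rw [intervalIntegral.integral_congr h2, intervalIntegral.integral_const_mul, aux_K m]
  -- Step 5: final arithmetic
  have hπ : Real.pi ≠ 0 := Real.pi_ne_zero
  have h4 : (4:ℝ)^(m+2) ≠ 0 := by positivity
  have hm2 : ((m:ℝ)+2) ≠ 0 := by positivity
  rw [hpdef]
  push_cast
  field_simp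
  ring
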